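/- Let k ≥ 2 and let G be a graph containing no copy of M̄_k⁺ (the complete graph on 2k vertices minus a perfect matching, plus one matching edge restored). Then any two vertex-disjoint copies of K_k in G span at most one copy of M̄_k. -/

import Mathlib

open SimpleGraph

/-- Number of (unlabeled) subgraph copies of `H` in `G`. -/
noncomputable def copyCount {α β : Type*} [Fintype β] (H : SimpleGraph α) (G : SimpleGraph β) : ℕ :=
  {G' : G.Subgraph | Nonempty (G'.coe ≃g H)}.ncard

/-- The graph `M̄_k`: the complete graph on `2k` vertices minus a perfect matching, realized
on `Fin k × Fin 2` where two vertices are adjacent iff they differ in the first coordinate. -/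
def matchingComplement (k : ℕ) : SimpleGraph (Fin k × Fin 2) :=
  SimpleGraph.comap Prod.fst ⊤

/-- The graph `M̄_k⁺`: `K_{2k}` minus all but one edge of a perfect matching, i.e. `M̄_k`
with one matching edge restored. -/
def matchingComplementPlus (k : ℕ) [NeZero k] : SimpleGraph (Fin k × Fin 2) :=
  matchingComplement k ⊔ SimpleGraph.fromEdgeSet {s(((0 : Fin k), (0 : Fin 2)), (0, 1))}

instance subgraphFinite {β : Type*} [Finite β] (G : SimpleGraph β) : Finite G.Subgraph := by
  have hinj : Function.Injective (fun G' : G.Subgraph => (G'.verts, G'.Adj)) := by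
    intro x y h
    exact SimpleGraph.Subgraph.ext (congrArg Prod.fst h) (congrArg Prod.snd h)
  exact Finite.of_injective _ hinj

lemma fin2_swap {p q : Fin 2} (h : p ≠ q) : Equiv.swap p 0 q = 1 := by
  revert h; fin_cases p <;> fin_cases q <;> decide

lemma key {β : Type*} [Fintype β] (G : SimpleGraph β) (k : ℕ) [NeZero k]
    (hfree : _root_.copyCount (matchingComplementPlus k) G = 0)
    (G₁ : G.Subgraph) (f : G₁.coe ≃g matchingComplement k)
    (a b : β) (hab : G.Adj a b) (ha : a ∈ G₁.verts) (hb : b ∈ G₁.verts)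
    (hno : ¬ G₁.Adj a b) : False := by
  have hne : a ≠ b := hab.ne
  set p := f ⟨a, ha⟩ with hp
  set q := f ⟨b, hb⟩ with hq
  have hpq : p ≠ q := by
    intro h
    exact hne (congrArg Subtype.val (f.toEquiv.injective h))
  have hfst : p.1 = q.1 := by
    by_contra h
    exact hno (f.map_rel_iff.mp h)
  have hsnd : p.2 ≠ q.2 := by
    intro h
    exact hpq (Prod.ext hfst h)
  set σ : (Fin k × Fin 2) ≃ (Fin k × Fin 2) :=
    Equiv.prodCongr (Equiv.swap p.1 0) (Equiv.swap p.2 0) with hσ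
  have hσp : σ p = ((0 : Fin k), (0 : Fin 2)) :=
    Prod.ext (Equiv.swap_apply_left p.1 0) (Equiv.swap_apply_left p.2 0)
  have hσq : σ q = ((0 : Fin k), (1 : Fin 2)) := by
    refine Prod.ext ?_ ?_
    · show Equiv.swap p.1 0 q.1 = 0
      rw [← hfst, Equiv.swap_apply_left]
    · show Equiv.swap p.2 0 q.2 = 1
      exact fin2_swap hsnd
  let G₃ : G.Subgraph :=
  { verts := G₁.verts
    Adj := fun x y => G₁.Adj x y ∨ s(x, y) = s(a, b)
    adj_sub := by
      rintro x y (h | h)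
      · exact G₁.adj_sub h
      · rcases Sym2.eq_iff.mp h with ⟨rfl, rfl⟩ | ⟨rfl, rfl⟩
        · exact hab
        · exact hab.symm
    edge_vert := by
      rintro x y (h | h)
      · exact G₁.edge_vert h
      · rcases Sym2.eq_iff.mp h with ⟨rfl, rfl⟩ | ⟨rfl, rfl⟩ <;> assumption
    symm := by
      refine ⟨?_⟩; rintro x y (h | h)
      · exact Or.inl (G₁.adj_symm h)
      · exact Or.inr (by rwa [Sym2.eq_swap]) }
  have hiso : Nonempty (G₃.coe ≃g matchingComplementPlus k) := by
    refine ⟨⟨f.toEquiv.trans σ, ?_⟩⟩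
    intro x y
    simp only [Equiv.trans_apply]
    show (matchingComplementPlus k).Adj (σ (f x)) (σ (f y)) ↔
      (G₁.Adj x.1 y.1 ∨ s(x.1, y.1) = s(a, b))
    rw [matchingComplementPlus, sup_adj, fromEdgeSet_adj]
    constructor
    · rintro (h | ⟨hs, -⟩)
      · left
        simp only [matchingComplement, comap_adj, top_adj] at h
        have h' : (f x).1 ≠ (f y).1 := by
          intro hc
          apply h
          show Equiv.swap p.1 0 (f x).1 = Equiv.swap p.1 0 (f y).1
          rw [hc]
        exact f.map_rel_iff.mp h'
      · right
        rw [Set.mem_singleton_iff, ← hσp, ← hσq, Sym2.eq_iff] at hs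
        have hinj : Function.Injective fun z : G₁.verts => σ (f z) :=
          σ.injective.comp f.toEquiv.injective
        rcases hs with ⟨h1, h2⟩ | ⟨h1, h2⟩
        · have hx : x = ⟨a, ha⟩ := hinj h1
          have hy : y = ⟨b, hb⟩ := hinj h2
          rw [hx, hy]
        · have hx : x = ⟨b, hb⟩ := hinj h1
          have hy : y = ⟨a, ha⟩ := hinj h2
          rw [hx, hy, Sym2.eq_swap]
    · rintro (h | h)
      · left
        have hAdj : (matchingComplement k).Adj (f x) (f y) := f.map_rel_iff.mpr h
        simp only [matchingComplement, comap_adj, top_adj] at hAdj ⊢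
        intro hc
        apply hAdj
        have : Equiv.swap p.1 0 (f x).1 = Equiv.swap p.1 0 (f y).1 := hc
        exact (Equiv.swap p.1 0).injective this
      · right
        have hne01 : ((0 : Fin k), (0 : Fin 2)) ≠ ((0 : Fin k), (1 : Fin 2)) := by
          simp [Prod.ext_iff]
        rcases Sym2.eq_iff.mp h with ⟨hxa, hyb⟩ | ⟨hxb, hya⟩
        · have hx : x = ⟨a, ha⟩ := Subtype.ext hxa
          have hy : y = ⟨b, hb⟩ := Subtype.ext hyb
          rw [hx, hy, ← hp, ← hq, hσp, hσq]
          exact ⟨rfl, hne01⟩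
        · have hx : x = ⟨b, hb⟩ := Subtype.ext hxb
          have hy : y = ⟨a, ha⟩ := Subtype.ext hya
          rw [hx, hy, ← hp, ← hq, hσp, hσq, Sym2.eq_swap]
          exact ⟨rfl, Ne.symm hne01⟩
  have hmem : G₃ ∈ {G' : G.Subgraph | Nonempty (G'.coe ≃g matchingComplementPlus k)} := hiso
  rw [_root_.copyCount, Set.ncard_eq_zero (Set.toFinite _)] at hfree
  rw [hfree] at hmem
  exact hmem

/-- In a graph `G` containing no copy of `M̄_k⁺`, any two vertex-disjoint copies of `K_k`
span at most one copy of `M̄_k`. -/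
theorem matchingComplementPlus_free_span_at_most_one {β : Type*} [Fintype β] [DecidableEq β]
    (G : SimpleGraph β) (k : ℕ) (hk : 2 ≤ k) [NeZero k]
    (hfree : _root_.copyCount (matchingComplementPlus k) G = 0) (S T : Finset β)
    (hS : G.IsNClique k S) (hT : G.IsNClique k T) (hdisj : Disjoint S T) :
    {G' : G.Subgraph | G'.verts = ↑(S ∪ T) ∧
      Nonempty (G'.coe ≃g matchingComplement k)}.ncard ≤ 1 := by
  rw [Set.ncard_le_one (Set.toFinite _)]
  rintro G₁ ⟨hv1, ⟨f1⟩⟩ G₂ ⟨hv2, ⟨f2⟩⟩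
  by_contra hne
  have hAdj : G₁.Adj ≠ G₂.Adj := fun h =>
    hne (SimpleGraph.Subgraph.ext (hv1.trans hv2.symm) h)
  rw [Function.ne_iff] at hAdj
  obtain ⟨x, hx⟩ := hAdj
  rw [Function.ne_iff] at hx
  obtain ⟨y, hxy⟩ := hx
  by_cases h1 : G₁.Adj x y
  · have h2 : ¬ G₂.Adj x y := fun h2 => hxy (propext ⟨fun _ => h2, fun _ => h1⟩)
    have hxv : x ∈ G₂.verts := hv2 ▸ (hv1 ▸ G₁.edge_vert h1)
    have hyv : y ∈ G₂.verts := hv2 ▸ (hv1 ▸ G₁.edge_vert h1.symm)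
    exact key G k hfree G₂ f2 x y (G₁.adj_sub h1) hxv hyv h2
  · have h2 : G₂.Adj x y := by
      by_contra h2
      exact hxy (propext ⟨fun h => absurd h h1, fun h => absurd h h2⟩)
    have hxv : x ∈ G₁.verts := hv1 ▸ (hv2 ▸ G₂.edge_vert h2)
    have hyv : y ∈ G₁.verts := hv1 ▸ (hv2 ▸ G₂.edge_vert h2.symm)
    exact key G k hfree G₁ f1 x y (G₂.adj_sub h2) hxv hyv h1
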